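/- Let m ∈ ℝ, v > 0, let γ be the Gaussian probability measure on ℝ with mean m and variance v, and let f : ℝ → ℂ be Lebesgue integrable such that both ν ↦ 𝔉f(ν) and ν ↦ ν·𝔉f(ν) are Lebesgue integrable. Then for every x ∈ ℝ, ∫_ℝ (y − m) f(x + y) dγ(y) = (v/(2π)) ∫_ℝ e^{iνx} · (iν) · 𝔉f(ν) · exp(imν − vν²/2) dν. -/

import Mathlib

open MeasureTheory ProbabilityTheory Real Complex Filter
open scoped ENNReal NNReal

lemma auxQ_integrable (b : ℝ) (hb : 0 < b) (c : ℝ) :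
    Integrable (fun x : ℝ => Complex.exp (-(b:ℂ) * x ^ 2 + Complex.I * c * x)) := by
  have := integrable_cexp_quadratic (b := (b:ℂ)) (by simpa using hb) (Complex.I * c) 0
  simpa using this

lemma auxQ_integrable_mul (b : ℝ) (hb : 0 < b) (c : ℝ) :
    Integrable (fun x : ℝ => (x:ℂ) * Complex.exp (-(b:ℂ) * x ^ 2 + Complex.I * c * x)) := by
  refine Integrable.mono' (integrable_mul_exp_neg_mul_sq hb).abs ?_ ?_
  · apply Continuous.aestronglyMeasurable
    fun_prop
  · filter_upwards with x
    rw [norm_mul, Complex.norm_exp]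
    have h1 : (-(b:ℂ) * (x:ℂ) ^ 2 + Complex.I * (c:ℂ) * (x:ℂ)).re = -b * x ^ 2 := by
      simp [Complex.add_re, Complex.mul_re, ← Complex.ofReal_pow]
    rw [h1, Complex.norm_real, Real.norm_eq_abs, abs_mul,
      abs_of_pos (Real.exp_pos _)]

lemma auxQ_hasDerivAt (b c : ℂ) (z : ℂ) :
    HasDerivAt (fun z : ℂ => Complex.exp (-b * z ^ 2 + Complex.I * c * z))
      ((-2 * b * z + Complex.I * c) * Complex.exp (-b * z ^ 2 + Complex.I * c * z)) z := by
  have h1 : HasDerivAt (fun z : ℂ => -b * z ^ 2 + Complex.I * c * z)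
      (-2 * b * z + Complex.I * c) z := by
    have := ((hasDerivAt_pow 2 z).const_mul (-b)).add
      ((hasDerivAt_id z).const_mul (Complex.I * c))
    refine this.congr_deriv ?_
    rw [show (2:ℕ) - 1 = 1 from rfl]
    ring
  simpa [mul_comm] using h1.cexp

lemma auxQ_deriv_integral_zero (b : ℝ) (hb : 0 < b) (c : ℝ) :
    ∫ x : ℝ, (-2 * (b:ℂ) * x + Complex.I * c) *
      Complex.exp (-(b:ℂ) * x ^ 2 + Complex.I * c * x) = 0 := by
  set F : ℝ → ℂ := fun x => Complex.exp (-(b:ℂ) * x ^ 2 + Complex.I * c * x) with hF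
  set F' : ℝ → ℂ := fun x => (-2 * (b:ℂ) * x + Complex.I * c) *
      Complex.exp (-(b:ℂ) * x ^ 2 + Complex.I * c * x) with hF'
  have hderiv : ∀ x : ℝ, HasDerivAt F (F' x) x := fun x =>
    (auxQ_hasDerivAt (b:ℂ) (c:ℂ) (x:ℂ)).comp_ofReal
  have hint : Integrable F' := by
    have h := ((auxQ_integrable_mul b hb c).const_mul (-2*(b:ℂ))).add
      ((auxQ_integrable b hb c).const_mul (Complex.I * c))
    refine h.congr (Filter.Eventually.of_forall fun x => ?_)
    simp only [hF', Pi.add_apply]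
    ring
  have hnorm : ∀ x : ℝ, ‖F x‖ = Real.exp (-b * x ^ 2) := by
    intro x
    rw [hF, Complex.norm_exp]
    congr 1
    simp [Complex.add_re, Complex.mul_re, ← Complex.ofReal_pow]
  have hsq_top : Tendsto (fun x : ℝ => -b * x ^ 2) atTop atBot := by
    have h2 : Tendsto (fun x : ℝ => b * x ^ 2) atTop atTop :=
      Tendsto.const_mul_atTop hb (tendsto_pow_atTop (two_ne_zero (α := ℕ)))
    simpa [Function.comp_def, neg_mul] using tendsto_neg_atTop_atBot.comp h2
  have hsq_bot : Tendsto (fun x : ℝ => -b * x ^ 2) atBot atBot := by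
    have h2 : Tendsto (fun x : ℝ => b * x ^ 2) atBot atTop := by
      have h3 : Tendsto (fun x : ℝ => x ^ 2) atBot atTop := by
        have := (tendsto_pow_atTop (α := ℝ) (two_ne_zero (α := ℕ))).comp (tendsto_neg_atBot_atTop (G := ℝ))
        simpa [Function.comp_def, neg_sq] using this
      exact Tendsto.const_mul_atTop hb h3
    simpa [Function.comp_def, neg_mul] using tendsto_neg_atTop_atBot.comp h2
  have htop : Tendsto F atTop (nhds (0:ℂ)) := by
    rw [tendsto_zero_iff_norm_tendsto_zero]
    simp_rw [hnorm]
    exact Real.tendsto_exp_atBot.comp hsq_top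
  have hbot : Tendsto F atBot (nhds (0:ℂ)) := by
    rw [tendsto_zero_iff_norm_tendsto_zero]
    simp_rw [hnorm]
    exact Real.tendsto_exp_atBot.comp hsq_bot
  have h1 : ∫ x in Set.Iic (0:ℝ), F' x = F 0 - 0 :=
    integral_Iic_of_hasDerivAt_of_tendsto' (fun x _ => hderiv x) hint.integrableOn hbot
  have h2 : ∫ x in Set.Ioi (0:ℝ), F' x = 0 - F 0 :=
    integral_Ioi_of_hasDerivAt_of_tendsto' (fun x _ => hderiv x) hint.integrableOn htop
  rw [show (∫ x : ℝ, F' x) = (∫ x in Set.Iic (0:ℝ), F' x) + ∫ x in Set.Ioi (0:ℝ), F' x from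
    (intervalIntegral.integral_Iic_add_Ioi hint.integrableOn hint.integrableOn).symm, h1, h2]
  ring

lemma auxQ_integral_mul (b : ℝ) (hb : 0 < b) (c : ℝ) :
    ∫ x : ℝ, (x:ℂ) * Complex.exp (-(b:ℂ) * x ^ 2 + Complex.I * c * x)
      = (Complex.I * c / (2 * b)) *
        ∫ x : ℝ, Complex.exp (-(b:ℂ) * x ^ 2 + Complex.I * c * x) := by
  have h0 := auxQ_deriv_integral_zero b hb c
  have hsplit : ∫ x : ℝ, (-2 * (b:ℂ) * x + Complex.I * c) *
        Complex.exp (-(b:ℂ) * x ^ 2 + Complex.I * c * x)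
      = (-2 * (b:ℂ)) * (∫ x : ℝ, (x:ℂ) * Complex.exp (-(b:ℂ) * x ^ 2 + Complex.I * c * x))
        + (Complex.I * c) * ∫ x : ℝ, Complex.exp (-(b:ℂ) * x ^ 2 + Complex.I * c * x) := by
    rw [← integral_const_mul, ← integral_const_mul,
      ← integral_add ((auxQ_integrable_mul b hb c).const_mul _)
        ((auxQ_integrable b hb c).const_mul _)]
    congr 1
    funext x
    ring
  rw [hsplit] at h0
  have hbne : (b:ℂ) ≠ 0 := by exact_mod_cast hb.ne'
  field_simp at h0 ⊢
  linear_combination -h0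

lemma auxQ_value (b : ℝ) (hb : 0 < b) (c : ℝ) :
    ∫ x : ℝ, (x:ℂ) * Complex.exp (-(b:ℂ) * x ^ 2 + Complex.I * c * x)
      = Complex.I * c / (2 * b) *
        ((Real.sqrt (π / b) : ℂ) * Complex.exp (-(c:ℂ) ^ 2 / (4 * b))) := by
  rw [auxQ_integral_mul b hb c]
  congr 1
  have h2 := integral_cexp_quadratic (b := (-(b:ℂ))) (by simpa using hb) (Complex.I * c) 0
  rw [show (fun x : ℝ => Complex.exp (-(b:ℂ) * x ^ 2 + Complex.I * c * x))
      = fun x : ℝ => Complex.exp (-(b:ℂ) * (x:ℂ) ^ 2 + Complex.I * c * x + 0) by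
    funext x; rw [add_zero]]
  rw [h2]
  congr 1
  · rw [show ((π : ℂ) / -(-(b:ℂ))) = ((π / b : ℝ) : ℂ) by push_cast; ring,
      show ((1/2 : ℂ)) = ((1/2 : ℝ) : ℂ) by norm_num,
      ← Complex.ofReal_cpow (by positivity), ← Real.sqrt_eq_rpow]
  · congr 1
    have hI : (Complex.I * (c:ℂ)) ^ 2 = -(c:ℂ) ^ 2 := by
      rw [mul_pow, Complex.I_sq]; ring
    rw [hI]
    ring


/-- Fourier representation of the gradient step: if `f` is integrable, and both
`ν ↦ 𝔉f(ν)` and `ν ↦ ν·𝔉f(ν)` are integrable, where `𝔉f(ν) = ∫ e^{−iνy} f(y) dy`, then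
for the Gaussian measure `γ` with mean `m` and variance `v > 0`,
`∫ (y−m) f(x+y) dγ(y) = (v/(2π)) ∫ e^{iνx} (iν) 𝔉f(ν) exp(imν − vν²/2) dν`. -/
theorem stmt_3 (m : ℝ) (v : NNReal) (hv : 0 < v) (f : ℝ → ℂ)
    (hf : Integrable f)
    (hFf : Integrable (fun ν : ℝ => ∫ y : ℝ, Complex.exp (-Complex.I * ν * y) * f y))
    (hFf' : Integrable
      (fun ν : ℝ => (ν : ℂ) * ∫ y : ℝ, Complex.exp (-Complex.I * ν * y) * f y)) :
    ∀ x : ℝ,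
      ∫ y, ((y : ℂ) - (m : ℂ)) * f (x + y) ∂(gaussianReal m v)
        = ((v : ℂ) / (2 * Real.pi)) *
            ∫ ν : ℝ, Complex.exp (Complex.I * ν * x) * (Complex.I * ν) *
              (∫ y : ℝ, Complex.exp (-Complex.I * ν * y) * f y) *
              Complex.exp (Complex.I * m * ν - (v : ℂ) * ν ^ 2 / 2) := by
  intro x
  set V : ℝ := (v : ℝ) with hVdef
  have hVpos : 0 < V := hv
  have hVne : V ≠ 0 := hVpos.ne'
  have hb2 : 0 < V / 2 := by positivity
  -- Step A: LHS as Lebesgue integral against the density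
  have hgauss : gaussianReal m v
      = volume.withDensity (fun y => ((Real.toNNReal (gaussianPDFReal m v y) : ℝ≥0) : ℝ≥0∞)) := by
    rw [gaussianReal_of_var_ne_zero m hv.ne']
    rfl
  have hA : ∫ y, ((y : ℂ) - (m : ℂ)) * f (x + y) ∂(gaussianReal m v)
      = ∫ y : ℝ, (gaussianPDFReal m v y : ℂ) * (((y : ℂ) - (m : ℂ)) * f (x + y)) := by
    rw [hgauss, integral_withDensity_eq_integral_smul
      (f := fun y => Real.toNNReal (gaussianPDFReal m v y))
      (by exact measurable_real_toNNReal.comp (measurable_gaussianPDFReal m v)) _]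
    congr 1
    funext y
    rw [NNReal.smul_def, Real.coe_toNNReal _ (gaussianPDFReal_nonneg m v y), Complex.real_smul]
  -- Step B: translation
  have hB : ∫ y : ℝ, (gaussianPDFReal m v y : ℂ) * (((y : ℂ) - (m : ℂ)) * f (x + y))
      = ∫ y : ℝ, (gaussianPDFReal m v (y - x) : ℂ) * (((y : ℂ) - x - m) * f y) := by
    rw [← integral_add_left_eq_self
      (fun y : ℝ => (gaussianPDFReal m v (y - x) : ℂ) * (((y : ℂ) - x - m) * f y)) x]
    congr 1
    funext y
    rw [show x + y - x = y by ring]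
    push_cast
    ring
  -- Step C: RHS integrand as an inner integral
  have hC : ∀ ν : ℝ, Complex.exp (Complex.I * ν * x) * (Complex.I * ν) *
        (∫ y : ℝ, Complex.exp (-Complex.I * ν * y) * f y) *
        Complex.exp (Complex.I * m * ν - (v : ℂ) * ν ^ 2 / 2)
      = ∫ y : ℝ, Complex.I * ν *
          Complex.exp (-((V/2 : ℝ) : ℂ) * (ν:ℂ) ^ 2 + Complex.I * ((x + m - y : ℝ):ℂ) * ν) * f y := by
    intro ν
    have h1 : ∀ y : ℝ, Complex.exp (Complex.I * ν * x)
          * Complex.exp (Complex.I * m * ν - (v : ℂ) * ν ^ 2 / 2)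
          * Complex.exp (-Complex.I * ν * y)
        = Complex.exp (-((V/2 : ℝ) : ℂ) * (ν:ℂ) ^ 2 + Complex.I * ((x + m - y : ℝ):ℂ) * ν) := by
      intro y
      rw [← Complex.exp_add, ← Complex.exp_add]
      congr 1
      push_cast
      ring
    calc Complex.exp (Complex.I * ν * x) * (Complex.I * ν) *
          (∫ y : ℝ, Complex.exp (-Complex.I * ν * y) * f y) *
          Complex.exp (Complex.I * m * ν - (v : ℂ) * ν ^ 2 / 2)
        = (Complex.exp (Complex.I * ν * x) * (Complex.I * ν) *
            Complex.exp (Complex.I * m * ν - (v : ℂ) * ν ^ 2 / 2)) *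
            ∫ y : ℝ, Complex.exp (-Complex.I * ν * y) * f y := by ring
      _ = ∫ y : ℝ, (Complex.exp (Complex.I * ν * x) * (Complex.I * ν) *
            Complex.exp (Complex.I * m * ν - (v : ℂ) * ν ^ 2 / 2)) *
            (Complex.exp (-Complex.I * ν * y) * f y) := (integral_const_mul _ _).symm
      _ = _ := by
          congr 1
          funext y
          rw [← h1 y]
          ring
  -- Step D: Fubini
  have hK_int : Integrable (Function.uncurry fun ν y : ℝ => Complex.I * ν *
      Complex.exp (-((V/2 : ℝ) : ℂ) * (ν:ℂ) ^ 2 + Complex.I * ((x + m - y : ℝ):ℂ) * ν) * f y)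
      (volume.prod volume) := by
    refine Integrable.mono'
      (g := fun p : ℝ × ℝ => ‖p.1 * Real.exp (-(V/2) * p.1 ^ 2)‖ * ‖f p.2‖)
      ((integrable_mul_exp_neg_mul_sq hb2).norm.mul_prod hf.norm) ?_ ?_
    · apply AEStronglyMeasurable.mul _ hf.1.comp_snd
      apply Continuous.aestronglyMeasurable
      fun_prop
    · filter_upwards with p
      simp only [Function.uncurry, norm_mul, Complex.norm_I,
        Complex.norm_real, Complex.norm_exp, one_mul, Real.norm_eq_abs, abs_mul,
        abs_of_pos (Real.exp_pos _)]
      have hre : (-((V/2 : ℝ) : ℂ) * (p.1:ℂ) ^ 2 + Complex.I * ((x + m - p.2 : ℝ):ℂ) * p.1).re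
          = -(V/2) * p.1 ^ 2 := by
        simp [Complex.add_re, Complex.mul_re, ← Complex.ofReal_pow]
      rw [hre]
  have hswap : (∫ ν : ℝ, ∫ y : ℝ, Complex.I * ν *
        Complex.exp (-((V/2 : ℝ) : ℂ) * (ν:ℂ) ^ 2 + Complex.I * ((x + m - y : ℝ):ℂ) * ν) * f y)
      = ∫ y : ℝ, ∫ ν : ℝ, Complex.I * ν *
        Complex.exp (-((V/2 : ℝ) : ℂ) * (ν:ℂ) ^ 2 + Complex.I * ((x + m - y : ℝ):ℂ) * ν) * f y :=
    integral_integral_swap hK_int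
  -- Step E: inner integral value
  have hInner : ∀ y : ℝ, (∫ ν : ℝ, Complex.I * ν *
        Complex.exp (-((V/2 : ℝ) : ℂ) * (ν:ℂ) ^ 2 + Complex.I * ((x + m - y : ℝ):ℂ) * ν) * f y)
      = ((-(x + m - y)/V * Real.sqrt (π / (V/2)) * Real.exp (-(x + m - y) ^ 2 / (2 * V)) : ℝ) : ℂ)
          * f y := by
    intro y
    have h1 : (fun ν : ℝ => Complex.I * ν *
          Complex.exp (-((V/2 : ℝ) : ℂ) * (ν:ℂ) ^ 2 + Complex.I * ((x + m - y : ℝ):ℂ) * ν) * f y)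
        = fun ν : ℝ => (Complex.I * f y) * ((ν:ℂ) *
          Complex.exp (-((V/2 : ℝ) : ℂ) * (ν:ℂ) ^ 2 + Complex.I * ((x + m - y : ℝ):ℂ) * ν)) := by
      funext ν
      ring
    rw [h1, integral_const_mul, auxQ_value (V/2) hb2 (x + m - y)]
    push_cast
    rw [show (4 * ((V:ℂ)/2)) = 2 * (V:ℂ) from by ring]
    have hII := Complex.I_mul_I
    linear_combination (((x:ℂ) + m - y) * ((Real.sqrt (π / (V/2)) : ℝ) : ℂ) *
      Complex.exp (-((x:ℂ) + m - y) ^ 2 / (2 * (V:ℂ))) * f y / (V:ℂ)) * hII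
  -- Step F: final identification
  rw [hA, hB]
  have hRHS : ((v : ℂ) / (2 * Real.pi)) *
      ∫ ν : ℝ, Complex.exp (Complex.I * ν * x) * (Complex.I * ν) *
        (∫ y : ℝ, Complex.exp (-Complex.I * ν * y) * f y) *
        Complex.exp (Complex.I * m * ν - (v : ℂ) * ν ^ 2 / 2)
      = ∫ y : ℝ, ((V : ℂ) / (2 * Real.pi)) *
          (((-(x + m - y)/V * Real.sqrt (π / (V/2)) * Real.exp (-(x + m - y) ^ 2 / (2 * V)) : ℝ) : ℂ)
            * f y) := by
    rw [integral_congr_ae (Filter.Eventually.of_forall hC), hswap,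
      integral_congr_ae (Filter.Eventually.of_forall hInner), ← integral_const_mul]
  rw [hRHS]
  congr 1
  funext y
  have hs : Real.sqrt (2 * π * V) * Real.sqrt (π / (V/2)) = 2 * π := by
    rw [← Real.sqrt_mul (by positivity), show (2 * π * V) * (π / (V/2)) = (2*π)^2 by
      field_simp]
    exact Real.sqrt_sq (by positivity)
  have hreal : gaussianPDFReal m v (y - x) * (y - x - m)
      = V / (2 * π) * (-(x + m - y)/V * Real.sqrt (π / (V/2)) * Real.exp (-(x + m - y) ^ 2 / (2 * V))) := by
    have hsne : Real.sqrt (2 * π * V) ≠ 0 := by positivity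
    have hS : Real.sqrt (π / (V/2)) = 2 * π / Real.sqrt (2 * π * V) := by
      rw [eq_div_iff hsne]
      linarith [hs]
    rw [gaussianPDFReal, hS,
      show (-(x + m - y) ^ 2 / (2 * V)) = (-(y - x - m) ^ 2 / (2 * V)) by ring]
    rw [div_mul_eq_mul_div, inv_mul_eq_div]
    rw [← hVdef]
    field_simp
    ring
  calc (gaussianPDFReal m v (y - x) : ℂ) * (((y : ℂ) - x - m) * f y)
      = ((gaussianPDFReal m v (y - x) * (y - x - m) : ℝ) : ℂ) * f y := by push_cast; ring
    _ = ((V / (2 * π) * (-(x + m - y)/V * Real.sqrt (π / (V/2)) *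
          Real.exp (-(x + m - y) ^ 2 / (2 * V))) : ℝ) : ℂ) * f y := by rw [hreal]
    _ = _ := by push_cast; ring
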